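/- Let (X, Y, A) be jointly distributed with Y, A ∈ {0,1}, let f : X → Z be a feature map, and let H ⊆ 2^Z contain all measurable binary classifiers from Z to {0,1}. Then for every h ∈ H, Util₀(h ∘ f) + Util₁(h ∘ f) + Priv_A(H ∘ f) ≤ 3 − (1/3) D_JS(D₀^Y, D₁^Y), where D_a^Y is the conditional distribution of Y given A = a. -/

import Mathlib

open MeasureTheory ProbabilityTheory
open scoped ENNReal

/-- Kullback–Leibler divergence (base-2 logarithm) between two mass functions,
with the usual conventions `0 log 0 = 0`. -/
noncomputable def klFun {α : Type*} (P Q : α → ℝ≥0∞) : ℝ :=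
  ∑' a, (P a).toReal * Real.logb 2 ((P a).toReal / (Q a).toReal)

/-- Jensen–Shannon divergence (base-2 logarithm):
`D_JS(P, Q) = (1/2) D_KL(P ‖ M) + (1/2) D_KL(Q ‖ M)` where `M = (P + Q)/2`. -/
noncomputable def jsFun {α : Type*} (P Q : α → ℝ≥0∞) : ℝ :=
  (klFun P (fun a => (P a + Q a) / 2) + klFun Q (fun a => (P a + Q a) / 2)) / 2

/-- `privA μ A g` is the privacy of a binary classifier output `g` with respect to the
binary sensitive attribute `A`, `1 - |Pr(g = 1 | A = 1) - Pr(g = 1 | A = 0)|`. -/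
noncomputable def privA {Ω : Type*} [MeasurableSpace Ω] (μ : Measure Ω)
    (A : Ω → Bool) (g : Ω → Bool) : ℝ :=
  1 - |((ProbabilityTheory.cond μ {ω | A ω = true}) {ω | g ω = true}).toReal -
        ((ProbabilityTheory.cond μ {ω | A ω = false}) {ω | g ω = true}).toReal|

/-- Conditional error `Err_a(g) = E[|Y - g(X)| | A = a]` of a binary classifier. -/
noncomputable def errCond {Ω : Type*} [MeasurableSpace Ω] (μ : Measure Ω)
    (Y A : Ω → Bool) (g : Ω → Bool) (a : Bool) : ℝ :=
  ∫ ω, |(if Y ω then (1:ℝ) else 0) - (if g ω then (1:ℝ) else 0)|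
    ∂(ProbabilityTheory.cond μ {ω' | A ω' = a})

/- ### Auxiliary lemmas -/

lemma utp_klterm (p q : ℝ) (hp : 0 ≤ p) (hq : 0 ≤ q) :
    p * Real.logb 2 (p / ((p + q) / 2)) ≤ |p - q| / Real.log 2 := by
  have hlog2 : 0 < Real.log 2 := Real.log_pos (by norm_num)
  rcases eq_or_lt_of_le hp with h0 | hp'
  · rw [← h0]
    simp
    positivity
  · have hpq : 0 < p + q := by linarith
    have hx : 0 < p / ((p + q) / 2) := by positivity
    have hlog : Real.log (p / ((p + q) / 2)) ≤ p / ((p + q) / 2) - 1 :=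
      Real.log_le_sub_one_of_pos hx
    have hxval : p / ((p + q) / 2) - 1 = (p - q) / (p + q) := by
      field_simp; ring
    rw [Real.logb, ← mul_div_assoc, div_le_div_iff_of_pos_right hlog2]
    calc p * Real.log (p / ((p + q) / 2)) ≤ p * ((p - q) / (p + q)) := by
          apply mul_le_mul_of_nonneg_left _ hp
          rw [← hxval]; exact hlog
      _ ≤ |p - q| := by
          rw [← mul_div_assoc, div_le_iff₀ hpq]
          nlinarith [le_abs_self (p - q), abs_nonneg (p - q)]

lemma utp_midReal (a b : ℝ≥0∞) (ha : a ≠ ∞) (hb : b ≠ ∞) :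
    ((a + b) / 2).toReal = (a.toReal + b.toReal) / 2 := by
  rw [ENNReal.toReal_div, ENNReal.toReal_add ha hb]
  norm_num

lemma utp_klBool (P Q : Bool → ℝ≥0∞) (hP : ∀ b, P b ≠ ∞) (hQ : ∀ b, Q b ≠ ∞) :
    klFun P (fun b => (P b + Q b) / 2) ≤
      (|(P true).toReal - (Q true).toReal| + |(P false).toReal - (Q false).toReal|)
        / Real.log 2 := by
  rw [klFun, tsum_bool, add_div]
  have t1 : (P false).toReal * Real.logb 2 ((P false).toReal / (((P false) + (Q false))/2).toReal)
      ≤ |(P false).toReal - (Q false).toReal| / Real.log 2 := by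
    rw [utp_midReal _ _ (hP false) (hQ false)]
    exact utp_klterm _ _ ENNReal.toReal_nonneg ENNReal.toReal_nonneg
  have t2 : (P true).toReal * Real.logb 2 ((P true).toReal / (((P true) + (Q true))/2).toReal)
      ≤ |(P true).toReal - (Q true).toReal| / Real.log 2 := by
    rw [utp_midReal _ _ (hP true) (hQ true)]
    exact utp_klterm _ _ ENNReal.toReal_nonneg ENNReal.toReal_nonneg
  linarith

lemma utp_jsBool (P Q : Bool → ℝ≥0∞) (hP : ∀ b, P b ≠ ∞) (hQ : ∀ b, Q b ≠ ∞) :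
    jsFun P Q ≤
      (|(P true).toReal - (Q true).toReal| + |(P false).toReal - (Q false).toReal|)
        / Real.log 2 := by
  have h1 := utp_klBool P Q hP hQ
  have h2 := utp_klBool Q P hQ hP
  have e : (fun b => (Q b + P b) / 2) = (fun b => (P b + Q b) / 2) := by
    funext b; rw [add_comm]
  rw [e] at h2
  rw [abs_sub_comm ((Q true).toReal), abs_sub_comm ((Q false).toReal)] at h2
  rw [jsFun]
  linarith

lemma utp_indEq {Ω : Type*} (Y : Ω → Bool) :
    (fun ω => if Y ω then (1:ℝ) else 0) = Set.indicator {ω | Y ω = true} (fun _ => (1:ℝ)) := by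
  funext ω
  by_cases hω : Y ω = true <;> simp [Set.indicator_apply, hω]

lemma utp_abs_prob_sub_le {Ω : Type*} [MeasurableSpace Ω] (ν : Measure Ω)
    [IsProbabilityMeasure ν] (Y g : Ω → Bool) (hY : Measurable Y) (hg : Measurable g) :
    |(ν {ω | Y ω = true}).toReal - (ν {ω | g ω = true}).toReal| ≤
      ∫ ω, |(if Y ω then (1:ℝ) else 0) - (if g ω then (1:ℝ) else 0)| ∂ν := by
  have hsY : MeasurableSet {ω | Y ω = true} := hY (measurableSet_singleton true)
  have hsg : MeasurableSet {ω | g ω = true} := hg (measurableSet_singleton true)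
  have intY : Integrable (fun ω => if Y ω then (1:ℝ) else 0) ν := by
    rw [utp_indEq]; exact (integrable_const (1:ℝ)).indicator hsY
  have intg : Integrable (fun ω => if g ω then (1:ℝ) else 0) ν := by
    rw [utp_indEq]; exact (integrable_const (1:ℝ)).indicator hsg
  have iY : ∫ ω, (if Y ω then (1:ℝ) else 0) ∂ν = (ν {ω | Y ω = true}).toReal := by
    rw [utp_indEq]
    exact integral_indicator_one hsY
  have ig : ∫ ω, (if g ω then (1:ℝ) else 0) ∂ν = (ν {ω | g ω = true}).toReal := by
    rw [utp_indEq]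
    exact integral_indicator_one hsg
  calc |(ν {ω | Y ω = true}).toReal - (ν {ω | g ω = true}).toReal|
      = |∫ ω, ((if Y ω then (1:ℝ) else 0) - (if g ω then (1:ℝ) else 0)) ∂ν| := by
        rw [integral_sub intY intg, iY, ig]
    _ ≤ ∫ ω, |(if Y ω then (1:ℝ) else 0) - (if g ω then (1:ℝ) else 0)| ∂ν := by
        simpa [Real.norm_eq_abs] using
          norm_integral_le_integral_norm
            (fun ω => (if Y ω then (1:ℝ) else 0) - (if g ω then (1:ℝ) else 0)) (μ := ν)

lemma utp_toReal_le_one {Ω : Type*} [MeasurableSpace Ω] (ν : Measure Ω)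
    [IsProbabilityMeasure ν] (s : Set Ω) : (ν s).toReal ≤ 1 := by
  simpa using ENNReal.toReal_mono ENNReal.one_ne_top (prob_le_one (μ := ν) (s := s))

lemma utp_privA_nonneg {Ω : Type*} [MeasurableSpace Ω] (μ : Measure Ω)
    [IsProbabilityMeasure μ] (A : Ω → Bool) (g : Ω → Bool)
    (hA0 : μ {ω | A ω = false} ≠ 0) (hA1 : μ {ω | A ω = true} ≠ 0) :
    0 ≤ privA μ A g := by
  haveI : IsProbabilityMeasure (ProbabilityTheory.cond μ {ω | A ω = false}) :=
    cond_isProbabilityMeasure hA0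
  haveI : IsProbabilityMeasure (ProbabilityTheory.cond μ {ω | A ω = true}) :=
    cond_isProbabilityMeasure hA1
  have h1 := utp_toReal_le_one (ProbabilityTheory.cond μ {ω | A ω = true}) {ω | g ω = true}
  have h0 := utp_toReal_le_one (ProbabilityTheory.cond μ {ω | A ω = false}) {ω | g ω = true}
  have h1' : (0:ℝ) ≤ ((ProbabilityTheory.cond μ {ω | A ω = true}) {ω | g ω = true}).toReal :=
    ENNReal.toReal_nonneg
  have h0' : (0:ℝ) ≤ ((ProbabilityTheory.cond μ {ω | A ω = false}) {ω | g ω = true}).toReal :=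
    ENNReal.toReal_nonneg
  rw [privA, sub_nonneg, abs_le]
  constructor <;> linarith

lemma utp_prob_false {Ω : Type*} [MeasurableSpace Ω] (ν : Measure Ω)
    [IsProbabilityMeasure ν] (Y : Ω → Bool) (hY : Measurable Y) :
    (ν {ω | Y ω = false}).toReal = 1 - (ν {ω | Y ω = true}).toReal := by
  have hsY : MeasurableSet {ω | Y ω = true} := hY (measurableSet_singleton true)
  have hset : {ω | Y ω = false} = {ω | Y ω = true}ᶜ := by
    ext ω; simp
  rw [hset, prob_compl_eq_one_sub hsY,
    ENNReal.toReal_sub_of_le prob_le_one ENNReal.one_ne_top]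
  simp

/-- utility–privacy trade-off: when `H` consists of all (measurable)
binary classifiers over `𝒵`, for every `h ∈ H`,
`Util₀(h∘f) + Util₁(h∘f) + Priv_A(H∘f) ≤ 3 - (1/3) D_JS(D₀^Y, D₁^Y)`. -/
theorem utility_privacy_tradeoff
    {Ω 𝒳 𝒵 : Type*} [MeasurableSpace Ω] [MeasurableSpace 𝒵]
    [MeasurableSingletonClass 𝒵] [Countable 𝒵]
    (μ : Measure Ω) [IsProbabilityMeasure μ]
    (X : Ω → 𝒳) (Y A : Ω → Bool) (f : 𝒳 → 𝒵)
    (hY : Measurable Y) (hA : Measurable A) (hfX : Measurable (fun ω => f (X ω)))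
    (hA0 : μ {ω | A ω = false} ≠ 0) (hA1 : μ {ω | A ω = true} ≠ 0) :
    ∀ h : 𝒵 → Bool,
      (1 - errCond μ Y A (fun ω => h (f (X ω))) false)
        + (1 - errCond μ Y A (fun ω => h (f (X ω))) true)
        + (⨅ g : 𝒵 → Bool, privA μ A (fun ω => g (f (X ω))))
      ≤ 3 - (1/3) * jsFun
          (fun b => (ProbabilityTheory.cond μ {ω | A ω = false}) {ω | Y ω = b})
          (fun b => (ProbabilityTheory.cond μ {ω | A ω = true}) {ω | Y ω = b}) := by
  intro h
  have hlog2 : (0.6931471803:ℝ) < Real.log 2 := Real.log_two_gt_d9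
  set ν0 := ProbabilityTheory.cond μ {ω | A ω = false} with hν0
  set ν1 := ProbabilityTheory.cond μ {ω | A ω = true} with hν1
  haveI p0 : IsProbabilityMeasure ν0 := cond_isProbabilityMeasure hA0
  haveI p1 : IsProbabilityMeasure ν1 := cond_isProbabilityMeasure hA1
  set g : Ω → Bool := fun ω => h (f (X ω)) with hgdef
  have hg : Measurable g := (measurable_of_countable h).comp hfX
  set p := (ν0 {ω | Y ω = true}).toReal with hp
  set q := (ν1 {ω | Y ω = true}).toReal with hq
  set x0 := (ν0 {ω | g ω = true}).toReal with hx0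
  set x1 := (ν1 {ω | g ω = true}).toReal with hx1
  -- error lower bounds
  have e0 : |p - x0| ≤ errCond μ Y A g false := by
    rw [errCond]
    exact utp_abs_prob_sub_le ν0 Y g hY hg
  have e1 : |q - x1| ≤ errCond μ Y A g true := by
    rw [errCond]
    exact utp_abs_prob_sub_le ν1 Y g hY hg
  -- privacy infimum bound
  have hinf : (⨅ g' : 𝒵 → Bool, privA μ A (fun ω => g' (f (X ω)))) ≤ privA μ A g := by
    have hbdd : BddBelow (Set.range fun g' : 𝒵 → Bool => privA μ A (fun ω => g' (f (X ω)))) := by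
      refine ⟨0, ?_⟩
      rintro r ⟨g', rfl⟩
      exact utp_privA_nonneg μ A _ hA0 hA1
    exact ciInf_le hbdd h
  have hpriv : privA μ A g = 1 - |x1 - x0| := rfl
  -- Jensen–Shannon bound
  have hPne : ∀ b, ν0 {ω | Y ω = b} ≠ ∞ := fun b => measure_ne_top _ _
  have hQne : ∀ b, ν1 {ω | Y ω = b} ≠ ∞ := fun b => measure_ne_top _ _
  have hjs := utp_jsBool (fun b => ν0 {ω | Y ω = b}) (fun b => ν1 {ω | Y ω = b}) hPne hQne
  have hPf : (ν0 {ω | Y ω = false}).toReal = 1 - p := utp_prob_false ν0 Y hY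
  have hQf : (ν1 {ω | Y ω = false}).toReal = 1 - q := utp_prob_false ν1 Y hY
  simp only [hPf, hQf] at hjs
  have habs : |1 - p - (1 - q)| = |p - q| := by
    rw [show (1:ℝ) - p - (1 - q) = -(p - q) by ring, abs_neg]
  rw [habs] at hjs
  -- hjs : jsFun ... ≤ (|p - q| + |p - q|) / Real.log 2
  have hjs3 : (1/3) * jsFun (fun b => ν0 {ω | Y ω = b}) (fun b => ν1 {ω | Y ω = b}) ≤ |p - q| := by
    have h2 : (|p - q| + |p - q|) / Real.log 2 ≤ 3 * |p - q| := by
      rw [div_le_iff₀ (by linarith)]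
      nlinarith [abs_nonneg (p - q)]
    linarith
  -- triangle inequality
  have htri : |p - q| ≤ |p - x0| + |x1 - x0| + |q - x1| := by
    calc |p - q| ≤ |p - x0| + |x0 - q| := abs_sub_le p x0 q
      _ ≤ |p - x0| + (|x0 - x1| + |x1 - q|) := by
          linarith [abs_sub_le x0 x1 q]
      _ = |p - x0| + |x1 - x0| + |q - x1| := by
          rw [abs_sub_comm x0 x1, abs_sub_comm x1 q]; ring
  rw [hpriv] at hinf
  linarith
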